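/- arXiv:1705.03047 — 2 statements merged into one kernel-verified Lean document; each statement's English description precedes it below -/
import Mathlib

section
/- Let a : [0,T] → ℝ be Lipschitz continuous with a(t) ≥ a₀ > 0 for all t, and let β > 0. If v : [0,T] → ℂ is a C² solution of v''(t) + β² a(t) v(t) = 0, then there exists a constant C > 0 (depending on a and T but not on β, v) such that for all t ∈ [0,T]: β²|v(t)|² + |v'(t)|² ≤ C (β²|v(0)|² + |v'(0)|²). -/
open Set Topology Filter

private lemma norm_sq_complex (z : ℂ) : ‖z‖ ^ 2 = z.re * z.re + z.im * z.im := by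
  rw [Complex.sq_norm, Complex.normSq_apply]

/-- Case 1 energy estimate for the ODE `v'' + β² a(t) v = 0` with Lipschitz,
strictly positive coefficient `a`. -/
theorem stmt_0 (T a₀ : ℝ) (hT : 0 < T) (a : ℝ → ℝ) (L : NNReal)
    (haLip : LipschitzOnWith L a (Icc 0 T))
    (ha₀ : 0 < a₀) (ha : ∀ t ∈ Icc 0 T, a₀ ≤ a t) :
    ∃ C > 0, ∀ β : ℝ, 0 < β → ∀ v v' v'' : ℝ → ℂ,
      (∀ t ∈ Icc 0 T, HasDerivAt v (v' t) t) →
      (∀ t ∈ Icc 0 T, HasDerivAt v' (v'' t) t) →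
      (∀ t ∈ Icc 0 T, v'' t + (β : ℂ) ^ 2 * (a t : ℂ) * v t = 0) →
      ∀ t ∈ Icc 0 T,
        β ^ 2 * ‖v t‖ ^ 2 + ‖v' t‖ ^ 2 ≤
          C * (β ^ 2 * ‖v 0‖ ^ 2 + ‖v' 0‖ ^ 2) := by
  have hL : (0:ℝ) ≤ L := L.coe_nonneg
  set K : ℝ := (L:ℝ) / a₀ with hK
  have hKnn : 0 ≤ K := div_nonneg hL ha₀.le
  have h0T : (0:ℝ) ∈ Icc 0 T := ⟨le_rfl, hT.le⟩
  have ha0 : a₀ ≤ a 0 := ha 0 h0T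
  refine ⟨(a₀⁻¹ + 1) * Real.exp (K * T) * (a 0 + 1), ?_, ?_⟩
  · have : (0:ℝ) < a 0 + 1 := by linarith [ha₀.trans_le ha0]
    positivity
  intro β hβ v v' v'' hv hv' hode t ht
  -- real components and energy functions
  set p : ℝ → ℝ := fun s => β ^ 2 * ((v s).re * (v s).re + (v s).im * (v s).im) with hp
  set q : ℝ → ℝ := fun s => (v' s).re * (v' s).re + (v' s).im * (v' s).im with hq
  set H : ℝ → ℝ := fun s => a s * p s + q s with hH
  have hpnn : ∀ s, 0 ≤ p s := fun s => by
    simp only [hp]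
    exact mul_nonneg (sq_nonneg β)
      (add_nonneg (mul_self_nonneg _) (mul_self_nonneg _))
  have hqnn : ∀ s, 0 ≤ q s := fun s =>
    add_nonneg (mul_self_nonneg _) (mul_self_nonneg _)
  -- derivatives of components
  have hvre : ∀ s ∈ Icc (0:ℝ) T, HasDerivAt (fun u => (v u).re) ((v' s).re) s := fun s hs =>
    (Complex.reCLM.hasFDerivAt.comp_hasDerivAt s (hv s hs))
  have hvim : ∀ s ∈ Icc (0:ℝ) T, HasDerivAt (fun u => (v u).im) ((v' s).im) s := fun s hs =>
    (Complex.imCLM.hasFDerivAt.comp_hasDerivAt s (hv s hs))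
  have hv're : ∀ s ∈ Icc (0:ℝ) T, HasDerivAt (fun u => (v' u).re) ((v'' s).re) s := fun s hs =>
    (Complex.reCLM.hasFDerivAt.comp_hasDerivAt s (hv' s hs))
  have hv'im : ∀ s ∈ Icc (0:ℝ) T, HasDerivAt (fun u => (v' u).im) ((v'' s).im) s := fun s hs =>
    (Complex.imCLM.hasFDerivAt.comp_hasDerivAt s (hv' s hs))
  have hpder : ∀ s ∈ Icc (0:ℝ) T, HasDerivAt p
      (β ^ 2 * ((v' s).re * (v s).re + (v s).re * (v' s).re +
        ((v' s).im * (v s).im + (v s).im * (v' s).im))) s := fun s hs =>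
    ((((hvre s hs).mul (hvre s hs)).add ((hvim s hs).mul (hvim s hs))).const_mul _)
  have hqder : ∀ s ∈ Icc (0:ℝ) T, HasDerivAt q
      ((v'' s).re * (v' s).re + (v' s).re * (v'' s).re +
        ((v'' s).im * (v' s).im + (v' s).im * (v'' s).im)) s := fun s hs =>
    (((hv're s hs).mul (hv're s hs)).add ((hv'im s hs).mul (hv'im s hs)))
  -- ODE in components
  have hode' : ∀ s ∈ Icc (0:ℝ) T, (v'' s).re = -(β ^ 2 * a s) * (v s).re ∧
      (v'' s).im = -(β ^ 2 * a s) * (v s).im := by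
    intro s hs
    have h := hode s hs
    have h2 : v'' s = ((-(β ^ 2 * a s) : ℝ) : ℂ) * v s := by
      push_cast
      linear_combination h
    constructor
    · rw [h2, Complex.re_ofReal_mul]
    · rw [h2, Complex.im_ofReal_mul]
  -- key identity: a s * p' s + q' s = 0
  have hkey : ∀ s ∈ Icc (0:ℝ) T,
      a s * (β ^ 2 * ((v' s).re * (v s).re + (v s).re * (v' s).re +
        ((v' s).im * (v s).im + (v s).im * (v' s).im))) +
      ((v'' s).re * (v' s).re + (v' s).re * (v'' s).re +
        ((v'' s).im * (v' s).im + (v' s).im * (v'' s).im)) = 0 := by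
    intro s hs
    obtain ⟨h1, h2⟩ := hode' s hs
    rw [h1, h2]; ring
  -- continuity of H
  have hHcont : ContinuousOn H (Icc 0 T) := by
    apply ContinuousOn.add
    · exact haLip.continuousOn.mul
        (fun s hs => ((hpder s hs).continuousAt).continuousWithinAt)
    · exact fun s hs => ((hqder s hs).continuousAt).continuousWithinAt
  -- Gronwall
  have hgron : ∀ x ∈ Icc (0:ℝ) T, H x ≤ gronwallBound (H 0) K 0 (x - 0) := by
    apply le_gronwallBound_of_liminf_deriv_right_le (f' := fun x => (L:ℝ) * p x) hHcont
    · -- liminf slope condition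
      intro x hx r hr
      apply Filter.Eventually.frequently
      have hxIcc : x ∈ Icc (0:ℝ) T := ⟨hx.1, hx.2.le⟩
      have hrw : 𝓝[Set.Ioc x T] x = 𝓝[>] x := nhdsWithin_Ioc_eq_nhdsGT hx.2
      rw [← hrw]
      -- the limit of a z * slope p x z + slope q x z is 0
      have hslopep : Filter.Tendsto (slope p x) (𝓝[Set.Ioc x T] x)
          (𝓝 (β ^ 2 * ((v' x).re * (v x).re + (v x).re * (v' x).re +
            ((v' x).im * (v x).im + (v x).im * (v' x).im)))) := by
        refine (hasDerivAt_iff_tendsto_slope.mp (hpder x hxIcc)).mono_left ?_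
        exact nhdsWithin_mono x (fun z hz => ne_of_gt hz.1)
      have hslopeq : Filter.Tendsto (slope q x) (𝓝[Set.Ioc x T] x)
          (𝓝 ((v'' x).re * (v' x).re + (v' x).re * (v'' x).re +
            ((v'' x).im * (v' x).im + (v' x).im * (v'' x).im))) := by
        refine (hasDerivAt_iff_tendsto_slope.mp (hqder x hxIcc)).mono_left ?_
        exact nhdsWithin_mono x (fun z hz => ne_of_gt hz.1)
      have hacont : Filter.Tendsto a (𝓝[Set.Ioc x T] x) (𝓝 (a x)) := by
        refine (haLip.continuousOn x hxIcc).mono_left ?_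
        exact nhdsWithin_mono x (fun z hz => ⟨hx.1.trans hz.1.le, hz.2⟩)
      have hlim : Filter.Tendsto (fun z => a z * slope p x z + slope q x z)
          (𝓝[Set.Ioc x T] x) (𝓝 0) := by
        have := (hacont.mul hslopep).add hslopeq
        rwa [hkey x hxIcc] at this
      have hev1 : ∀ᶠ z in 𝓝[Set.Ioc x T] x,
          a z * slope p x z + slope q x z < r - (L:ℝ) * p x :=
        hlim.eventually_lt_const (by linarith)
      have hev2 : ∀ᶠ z in 𝓝[Set.Ioc x T] x, z ∈ Set.Ioc x T :=
        eventually_mem_nhdsWithin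
      filter_upwards [hev1, hev2] with z hz1 hz2
      have hzx : 0 < z - x := sub_pos.mpr hz2.1
      have hzIcc : z ∈ Icc (0:ℝ) T := ⟨hx.1.trans hz2.1.le, hz2.2⟩
      -- slope of a bounded by L
      have hlip : (z - x)⁻¹ * (a z - a x) ≤ (L:ℝ) := by
        have hd : |a z - a x| ≤ (L:ℝ) * |z - x| := by
          have := haLip.dist_le_mul z hzIcc x hxIcc
          rwa [Real.dist_eq, Real.dist_eq] at this
        have : a z - a x ≤ (L:ℝ) * (z - x) := by
          calc a z - a x ≤ |a z - a x| := le_abs_self _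
          _ ≤ (L:ℝ) * |z - x| := hd
          _ = (L:ℝ) * (z - x) := by rw [abs_of_pos hzx]
        rw [inv_mul_le_iff₀ hzx]  -- (z-x)⁻¹ * (a z - a x) ≤ L ↔ a z - a x ≤ L * (z - x)
        linarith [this]
      -- decompose the slope of H
      have hdecomp : (z - x)⁻¹ * (H z - H x) =
          a z * slope p x z + slope q x z + ((z - x)⁻¹ * (a z - a x)) * p x := by
        simp only [hH, slope_def_field, div_eq_inv_mul]
        ring
      rw [hdecomp]
      have : ((z - x)⁻¹ * (a z - a x)) * p x ≤ (L:ℝ) * p x :=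
        mul_le_mul_of_nonneg_right hlip (hpnn x)
      linarith
    · exact le_rfl
    · -- bound : L * p x ≤ K * H x + 0
      intro x hx
      have hxIcc : x ∈ Icc (0:ℝ) T := ⟨hx.1, hx.2.le⟩
      have h1 : a₀ * p x ≤ H x := by
        have := mul_le_mul_of_nonneg_right (ha x hxIcc) (hpnn x)
        have := hqnn x
        simp only [hH]; nlinarith
      have : (L:ℝ) * p x = K * (a₀ * p x) := by
        field_simp [hK]
        rw [hK, mul_assoc, div_mul_cancel₀ _ ha₀.ne', mul_comm]
      rw [this, add_zero]
      exact mul_le_mul_of_nonneg_left h1 hKnn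
  -- conclude
  have hHt := hgron t ht
  rw [sub_zero, gronwallBound_ε0] at hHt
  have hH0nn : 0 ≤ H 0 := by
    have := mul_nonneg (ha₀.le.trans ha0) (hpnn 0)
    have := hqnn 0
    simp only [hH]; linarith
  have hexp : Real.exp (K * t) ≤ Real.exp (K * T) :=
    Real.exp_le_exp.mpr (mul_le_mul_of_nonneg_left ht.2 hKnn)
  have hHt' : H t ≤ H 0 * Real.exp (K * T) :=
    hHt.trans (mul_le_mul_of_nonneg_left hexp hH0nn)
  -- p t + q t ≤ (a₀⁻¹ + 1) * H t
  have hlow : p t + q t ≤ (a₀⁻¹ + 1) * H t := by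
    have hat : a₀ ≤ a t := ha t ht
    have h1 : p t ≤ a₀⁻¹ * (a t * p t) := by
      have h2 := mul_le_mul_of_nonneg_left
        (mul_le_mul_of_nonneg_right hat (hpnn t)) (inv_nonneg.mpr ha₀.le)
      rwa [← mul_assoc, inv_mul_cancel₀ ha₀.ne', one_mul] at h2
    have h2 : 0 ≤ a t * p t := mul_nonneg (ha₀.le.trans hat) (hpnn t)
    have h3 := hqnn t
    have ha₀inv : 0 ≤ a₀⁻¹ := inv_nonneg.mpr ha₀.le
    simp only [hH]; nlinarith
  -- H 0 ≤ (a 0 + 1) * (p 0 + q 0)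
  have hup : H 0 ≤ (a 0 + 1) * (p 0 + q 0) := by
    have := hpnn 0; have := hqnn 0
    have h0 : 0 ≤ a 0 := ha₀.le.trans ha0
    simp only [hH]; nlinarith
  have hnorm : ∀ s, β ^ 2 * ‖v s‖ ^ 2 + ‖v' s‖ ^ 2 = p s + q s := by
    intro s
    simp only [hp, hq, norm_sq_complex]
  rw [hnorm t, hnorm 0]
  have ha₀inv : 0 ≤ a₀⁻¹ + 1 := by positivity
  have hexppos : 0 ≤ Real.exp (K * T) := (Real.exp_pos _).le
  calc p t + q t ≤ (a₀⁻¹ + 1) * H t := hlow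
    _ ≤ (a₀⁻¹ + 1) * (H 0 * Real.exp (K * T)) := mul_le_mul_of_nonneg_left hHt' ha₀inv
    _ ≤ (a₀⁻¹ + 1) * (((a 0 + 1) * (p 0 + q 0)) * Real.exp (K * T)) := by
        apply mul_le_mul_of_nonneg_left _ ha₀inv
        exact mul_le_mul_of_nonneg_right hup hexppos
    _ = (a₀⁻¹ + 1) * Real.exp (K * T) * (a 0 + 1) * (p 0 + q 0) := by ring
end

section
/- Strictly hyperbolic Hölder energy estimate (Case 2 consequence): let 0 < α < 1, a ∈ C^α([0,T]) with a(t) ≥ a₀ > 0, and 1 ≤ s < 1 + α/(1−α). Then there exist C, K > 0 such that for every β ≥ 1 and every C² solution v of v''(t) + β² a(t) v(t) = 0 on [0,T]: β²|v(t)|² + |v'(t)|² ≤ C e^{K t β^{1/s}} (β²|v(0)|² + |v'(0)|²). -/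
open Set intervalIntegral
local notation "⟪" x ", " y "⟫" => @inner ℝ ℂ _ x y

lemma aux_cont' {L α : ℝ} (hα : 0 < α) {f : ℝ → ℝ}
    (h : ∀ t τ, |f t - f τ| ≤ L * |t - τ| ^ α) : Continuous f := by
  rw [continuous_iff_continuousAt]
  intro t₀
  rw [ContinuousAt, tendsto_iff_dist_tendsto_zero]
  have hb : Filter.Tendsto (fun t => L * |t - t₀| ^ α) (nhds t₀) (nhds 0) := by
    have h1 : Filter.Tendsto (fun t : ℝ => |t - t₀|) (nhds t₀) (nhds 0) := by
      have : Continuous (fun t : ℝ => |t - t₀|) :=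
        (continuous_id.sub continuous_const).abs
      simpa using this.tendsto t₀
    have h2 : Filter.Tendsto (fun x : ℝ => L * x ^ α) (nhds 0) (nhds 0) := by
      have h3 : ContinuousAt (fun x : ℝ => x ^ α) 0 :=
        Real.continuousAt_rpow_const 0 α (Or.inr hα.le)
      have := (h3.tendsto).const_mul L
      simpa [Real.zero_rpow hα.ne'] using this
    exact h2.comp h1
  apply squeeze_zero (fun t => dist_nonneg) _ hb
  intro t
  rw [Real.dist_eq]
  exact h t t₀

lemma aux_gronwall {E E' : ℝ → ℝ} {T δ : ℝ} (hT : 0 ≤ T)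
    (hE : ∀ t ∈ Icc 0 T, HasDerivAt E (E' t) t)
    (hb : ∀ t ∈ Icc 0 T, E' t ≤ δ * E t) :
    ∀ t ∈ Icc 0 T, E t ≤ E 0 * Real.exp (δ * t) := by
  set g : ℝ → ℝ := fun t => E t * Real.exp (-δ * t) with hgdef
  have hg : ∀ t ∈ Icc 0 T, HasDerivAt g
      (E' t * Real.exp (-δ * t) + E t * (Real.exp (-δ * t) * (-δ))) t := by
    intro t ht
    have := (hE t ht).mul (((hasDerivAt_id t).const_mul (-δ)).exp)
    refine this.congr_deriv ?_; simp
  have hanti : AntitoneOn g (Icc 0 T) := by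
    apply antitoneOn_of_deriv_nonpos (convex_Icc 0 T)
    · exact fun x hx => (hg x hx).continuousAt.continuousWithinAt
    · intro x hx
      rw [interior_Icc] at hx
      exact (hg x (Ioo_subset_Icc_self hx)).differentiableAt.differentiableWithinAt
    · intro x hx
      rw [interior_Icc] at hx
      have hx' := Ioo_subset_Icc_self hx
      rw [(hg x hx').deriv]
      have h1 := hb x hx'
      have h2 := Real.exp_pos (-δ * x)
      nlinarith
  intro t ht
  have h0 : (0:ℝ) ∈ Icc (0:ℝ) T := ⟨le_refl 0, hT⟩
  have := hanti h0 ht ht.1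
  have hg0 : g 0 = E 0 := by simp [hgdef]
  rw [hg0] at this
  have hEt : E t = g t * Real.exp (δ * t) := by
    rw [hgdef]
    simp only
    rw [mul_assoc, ← Real.exp_add]
    ring_nf
    simp
  rw [hEt]
  exact mul_le_mul_of_nonneg_right this (Real.exp_pos _).le


lemma aux_mollify {L α a₀ ε : ℝ} (hα : 0 < α) (hL : 0 ≤ L) (hε : 0 < ε)
    {f : ℝ → ℝ} (hHol : ∀ t τ, |f t - f τ| ≤ L * |t - τ| ^ α) (hlb : ∀ t, a₀ ≤ f t) :
    ∃ g g' : ℝ → ℝ, (∀ t, HasDerivAt g (g' t) t) ∧ (∀ t, |g' t| ≤ L * ε ^ (α - 1)) ∧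
      (∀ t, |g t - f t| ≤ L * ε ^ α) ∧ (∀ t, a₀ ≤ g t) := by
  have hc : Continuous f := aux_cont' hα hHol
  set F : ℝ → ℝ := fun x => ∫ u in (0:ℝ)..x, f u with hF
  refine ⟨fun t => ε⁻¹ * (F (t + ε) - F t), fun t => ε⁻¹ * (f (t + ε) - f t), ?_, ?_, ?_, ?_⟩
  · intro t
    have h1 : HasDerivAt F (f (t + ε)) (t + ε) := (hc.integral_hasStrictDerivAt 0 (t + ε)).hasDerivAt
    have h2 : HasDerivAt F (f t) t := (hc.integral_hasStrictDerivAt 0 t).hasDerivAt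
    have h3 : HasDerivAt (fun x => F (x + ε)) (f (t + ε)) t := by
      have := h1.comp t ((hasDerivAt_id t).add_const ε)
      refine this.congr_deriv ?_; simp
    exact ((h3.sub h2).const_mul ε⁻¹)
  · intro t
    have h1 : |f (t + ε) - f t| ≤ L * ε ^ α := by
      have := hHol (t + ε) t
      simpa [abs_of_pos hε] using this
    rw [abs_mul, abs_inv, abs_of_pos hε]
    calc ε⁻¹ * |f (t + ε) - f t| ≤ ε⁻¹ * (L * ε ^ α) := by
          exact mul_le_mul_of_nonneg_left h1 (by positivity)
      _ = L * ε ^ (α - 1) := by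
          rw [Real.rpow_sub hε, Real.rpow_one]
          field_simp
  · intro t
    have hint : F (t + ε) - F t = ∫ u in t..(t + ε), f u := by
      rw [hF]
      have := integral_add_adjacent_intervals (μ := MeasureTheory.volume) (a := (0:ℝ)) (b := t) (c := t + ε)
        (hc.intervalIntegrable 0 t) (hc.intervalIntegrable t (t + ε))
      simp only []
      linarith [this]
    have heq : ε⁻¹ * (F (t + ε) - F t) - f t
        = ε⁻¹ * ∫ u in t..(t + ε), (f u - f t) := by
      rw [integral_sub (hc.intervalIntegrable t (t+ε))
        (_root_.intervalIntegrable_const (μ := MeasureTheory.volume) (c := f t)), hint, integral_const]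
      simp only [add_sub_cancel_left, smul_eq_mul]
      field_simp
    show |ε⁻¹ * (F (t + ε) - F t) - f t| ≤ L * ε ^ α
    rw [heq, abs_mul, abs_inv, abs_of_pos hε]
    have hbd : ‖∫ u in t..(t + ε), (f u - f t)‖ ≤ (L * ε ^ α) * |t + ε - t| := by
      apply norm_integral_le_of_norm_le_const
      intro x hx
      rw [uIoc_of_le (by linarith)] at hx
      have hx1 : |x - t| ≤ ε := by
        rw [abs_of_pos (by linarith [hx.1])]
        linarith [hx.2]
      calc ‖f x - f t‖ ≤ L * |x - t| ^ α := hHol x t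
        _ ≤ L * ε ^ α := by
            apply mul_le_mul_of_nonneg_left _ hL
            exact Real.rpow_le_rpow (abs_nonneg _) hx1 hα.le
    rw [Real.norm_eq_abs] at hbd
    simp only [add_sub_cancel_left, abs_of_pos hε] at hbd
    calc ε⁻¹ * |∫ u in t..(t + ε), (f u - f t)| ≤ ε⁻¹ * (L * ε ^ α * ε) :=
          mul_le_mul_of_nonneg_left hbd (by positivity)
      _ = L * ε ^ α := by field_simp
  · intro t
    have hint : F (t + ε) - F t = ∫ u in t..(t + ε), f u := by
      rw [hF]
      have := integral_add_adjacent_intervals (μ := MeasureTheory.volume) (a := (0:ℝ)) (b := t) (c := t + ε)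
        (hc.intervalIntegrable 0 t) (hc.intervalIntegrable t (t + ε))
      simp only []
      linarith [this]
    have hmono : ε * a₀ ≤ ∫ u in t..(t + ε), f u := by
      have := integral_mono_on (a := t) (b := t + ε) (f := fun _ => a₀) (g := f)
        (by linarith) (_root_.intervalIntegrable_const (μ := MeasureTheory.volume) (c := a₀)) (hc.intervalIntegrable t (t+ε))
        (fun x _ => hlb x)
      simpa using this
    show a₀ ≤ ε⁻¹ * (F (t + ε) - F t)
    rw [hint]
    have ha : a₀ = ε⁻¹ * (ε * a₀) := by field_simp
    rw [ha]
    exact mul_le_mul_of_nonneg_left hmono (inv_nonneg.mpr hε.le)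

set_option maxHeartbeats 2000000 in
/-- Case 2 energy estimate: for `a ∈ C^α([0,T])` with `a ≥ a₀ > 0` and
`1 ≤ s < 1 + α/(1−α)`, there exist `C, K > 0` such that every `C²` solution of
`v'' + β² a v = 0` satisfies
`β²|v(t)|² + |v'(t)|² ≤ C e^{Ktβ^{1/s}} (β²|v(0)|² + |v'(0)|²)`. -/
theorem stmt_19 (T α s L a₀ : ℝ) (hT : 0 < T) (hα : 0 < α) (hα1 : α < 1)
    (ha₀ : 0 < a₀) (a : ℝ → ℝ) (ha : ∀ t ∈ Icc 0 T, a₀ ≤ a t)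
    (haHol : ∀ t ∈ Icc 0 T, ∀ τ ∈ Icc 0 T, |a t - a τ| ≤ L * |t - τ| ^ α)
    (hs : 1 ≤ s) (hs' : s < 1 + α / (1 - α)) :
    ∃ C > 0, ∃ K > 0, ∀ β : ℝ, 1 ≤ β → ∀ v v' v'' : ℝ → ℂ,
      (∀ t ∈ Icc 0 T, HasDerivAt v (v' t) t) →
      (∀ t ∈ Icc 0 T, HasDerivAt v' (v'' t) t) →
      (∀ t ∈ Icc 0 T, v'' t + (β : ℂ) ^ 2 * (a t : ℂ) * v t = 0) →
      ∀ t ∈ Icc 0 T,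
        β ^ 2 * ‖v t‖ ^ 2 + ‖v' t‖ ^ 2 ≤
          C * Real.exp (K * t * β ^ (1 / s)) *
            (β ^ 2 * ‖v 0‖ ^ 2 + ‖v' 0‖ ^ 2) := by
  have h0T : (0:ℝ) ∈ Icc (0:ℝ) T := ⟨le_refl 0, hT.le⟩
  have hTT : T ∈ Icc (0:ℝ) T := ⟨hT.le, le_refl T⟩
  have hTα : (0:ℝ) < T ^ α := Real.rpow_pos_of_pos hT α
  have h1α : 0 < 1 - α := by linarith
  have hs0 : 0 < s := lt_of_lt_of_le one_pos hs
  have hL : 0 ≤ L := by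
    have h1 := le_trans (abs_nonneg _) (haHol 0 h0T T hTT)
    have h2 : |(0:ℝ) - T| ^ α = T ^ α := by rw [zero_sub, abs_neg, abs_of_pos hT]
    rw [h2] at h1
    nlinarith [h1, hTα]
  -- projection and extension
  set p : ℝ → ℝ := fun t => max 0 (min t T) with hp
  have hpmem : ∀ t, p t ∈ Icc (0:ℝ) T :=
    fun t => ⟨le_max_left _ _, max_le hT.le (min_le_right _ _)⟩
  have hpid : ∀ t ∈ Icc (0:ℝ) T, p t = t := by
    intro t ht
    simp only [hp]
    rw [min_eq_left ht.2, max_eq_right ht.1]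
  have hplip : ∀ t τ, |p t - p τ| ≤ |t - τ| := by
    intro t τ
    have h1 : |p t - p τ| ≤ |min t T - min τ T| := by
      simp only [hp, max_comm (0:ℝ)]
      exact abs_max_sub_max_le_abs _ _ _
    refine h1.trans ?_
    have := abs_min_sub_min_le_max t T τ T
    simpa using this
  set aext : ℝ → ℝ := fun t => a (p t) with hata
  have hHol' : ∀ t τ, |aext t - aext τ| ≤ L * |t - τ| ^ α := by
    intro t τ
    calc |aext t - aext τ| ≤ L * |p t - p τ| ^ α := haHol _ (hpmem t) _ (hpmem τ)
      _ ≤ L * |t - τ| ^ α :=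
          mul_le_mul_of_nonneg_left
            (Real.rpow_le_rpow (abs_nonneg _) (hplip t τ) hα.le) hL
  have hlb : ∀ t, a₀ ≤ aext t := fun t => ha _ (hpmem t)
  have hub : ∀ t, aext t ≤ a 0 + L * T ^ α := by
    intro t
    have h1 := haHol (p t) (hpmem t) 0 h0T
    have h2 : |p t - 0| ^ α ≤ T ^ α := by
      apply Real.rpow_le_rpow (abs_nonneg _) _ hα.le
      rw [sub_zero, abs_of_nonneg (hpmem t).1]
      exact (hpmem t).2
    have h3 : aext t - a 0 ≤ L * T ^ α := by
      calc aext t - a 0 ≤ |aext t - a 0| := le_abs_self _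
        _ ≤ L * |p t - 0| ^ α := h1
        _ ≤ L * T ^ α := mul_le_mul_of_nonneg_left h2 hL
    linarith
  set M : ℝ := a 0 + L * T ^ α + L with hM
  clear_value M
  have hMpos : 0 < M := by
    have := ha 0 h0T
    have : 0 < a 0 := lt_of_lt_of_le ha₀ this
    have hLt : 0 ≤ L * T ^ α := by positivity
    simp only [hM]; linarith
  refine ⟨(1/a₀ + 1) * (M + 1), by positivity, L/a₀ + L*(1/a₀ + 1) + 1, by positivity, ?_⟩
  intro β hβ v v' v'' hv hv' hode
  set K : ℝ := L/a₀ + L*(1/a₀ + 1) + 1 with hK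
  clear_value K
  have hβ0 : (0:ℝ) < β := lt_of_lt_of_le one_pos hβ
  set γ : ℝ := 1 / (s * (1 - α)) with hγ
  clear_value γ
  have hγpos : 0 < γ := by rw [hγ]; positivity
  set ε : ℝ := β ^ (-γ) with hεdef
  clear_value ε
  have hεpos : 0 < ε := by rw [hεdef]; exact Real.rpow_pos_of_pos hβ0 _
  have hε1 : ε ≤ 1 := by
    rw [hεdef]
    exact Real.rpow_le_one_of_one_le_of_nonpos hβ (by linarith)
  obtain ⟨g, g', hg, hg'bd, hga, hglb⟩ := aux_mollify hα hL hεpos hHol' hlb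
  set B : ℝ := β ^ (1/s) with hB
  clear_value B
  have hBpos : 0 < B := by rw [hB]; exact Real.rpow_pos_of_pos hβ0 _
  have hexp1 : ε ^ (α - 1) = B := by
    rw [hεdef, hB, ← Real.rpow_mul hβ0.le]
    congr 1
    rw [hγ]
    field_simp
    ring
  have hkey : s * (1-α) ≤ 1 := by
    have h3 : s * (1-α) < (1 + α/(1-α)) * (1-α) := mul_lt_mul_of_pos_right hs' h1α
    have h4 : (1 + α/(1-α)) * (1-α) = 1 := by field_simp; ring
    linarith
  have hexp2 : β * ε ^ α ≤ B := by
    have hsl : 0 < s*(1-α) := by positivity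
    have h1 : β * ε^α = β ^ ((1:ℝ) - γ*α) := by
      rw [hεdef, ← Real.rpow_mul hβ0.le]
      rw [show (1:ℝ) - γ*α = 1 + (-γ*α) by ring, Real.rpow_add hβ0, Real.rpow_one]
    have h2 : (1:ℝ) - γ*α ≤ 1/s := by
      have e : (1:ℝ) - γ*α = (s*(1-α) - α)/(s*(1-α)) := by
        rw [hγ]; field_simp
      rw [e, div_le_div_iff₀ hsl hs0]
      nlinarith [mul_le_mul_of_nonneg_left hkey hs0.le]
    rw [h1, hB]
    exact Real.rpow_le_rpow_of_exponent_le hβ h2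
  -- energies
  set E : ℝ → ℝ := fun t => β^2 * g t * ‖v t‖^2 + ‖v' t‖^2 with hE
  set D : ℝ → ℝ := fun t =>
    β^2 * g' t * ‖v t‖^2 + 2*β^2*(g t - aext t) * ⟪v t, v' t⟫ with hD
  clear_value E D
  have hEderiv : ∀ t ∈ Icc (0:ℝ) T, HasDerivAt E (D t) t := by
    intro t ht
    have hN : HasDerivAt (fun t => ‖v t‖^2) (2 * ⟪v t, v' t⟫) t := by
      have h1 := HasDerivAt.inner ℝ (hv t ht) (hv t ht)
      have h2 : (fun t => ⟪v t, v t⟫) = fun t => ‖v t‖^2 := by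
        funext u; rw [real_inner_self_eq_norm_sq]
      rw [h2] at h1
      refine h1.congr_deriv ?_
      rw [real_inner_comm]; ring
    have hW : HasDerivAt (fun t => ‖v' t‖^2) (2 * ⟪v' t, v'' t⟫) t := by
      have h1 := HasDerivAt.inner ℝ (hv' t ht) (hv' t ht)
      have h2 : (fun t => ⟪v' t, v' t⟫) = fun t => ‖v' t‖^2 := by
        funext u; rw [real_inner_self_eq_norm_sq]
      rw [h2] at h1
      refine h1.congr_deriv ?_
      rw [real_inner_comm]; ring
    have h3 := (((hg t).const_mul (β^2)).mul hN).add hW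
    have hode' : v'' t = (-(β^2 * aext t) : ℝ) • v t := by
      have h4 := hode t ht
      have h5 : v'' t = -((β:ℂ)^2 * (a t : ℂ) * v t) := by linear_combination h4
      rw [h5, hata]
      simp only [hpid t ht]
      rw [Complex.real_smul]
      push_cast
      ring
    have h6 : ⟪v' t, v'' t⟫ = -(β^2 * aext t) * ⟪v' t, v t⟫ := by
      rw [hode', real_inner_smul_right]
    rw [h6] at h3
    rw [hE]
    refine h3.congr_deriv ?_
    simp only [hD]
    rw [real_inner_comm (v t) (v' t)]
    ring
  -- derivative bound
  have hbd : ∀ t ∈ Icc (0:ℝ) T, D t ≤ (K * B) * E t := by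
    intro t ht
    have hN0 : (0:ℝ) ≤ ‖v t‖^2 := by positivity
    have hW0 : (0:ℝ) ≤ ‖v' t‖^2 := by positivity
    have hg'le : |g' t| ≤ L * B := by rw [← hexp1]; exact hg'bd t
    have hgale : |g t - aext t| ≤ L * ε^α := hga t
    have hPle : |⟪v t, v' t⟫| ≤ ‖v t‖ * ‖v' t‖ := abs_real_inner_le_norm _ _
    have hβ2N : (0:ℝ) ≤ β^2 * ‖v t‖^2 := by positivity
    have hgpos : (0:ℝ) ≤ g t := le_trans ha₀.le (hglb t)
    have hEge : a₀ * (β^2 * ‖v t‖^2) ≤ E t := by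
      simp only [hE]
      have h1 := mul_le_mul_of_nonneg_right (hglb t) hβ2N
      linarith
    have hWle : ‖v' t‖^2 ≤ E t := by
      simp only [hE]
      have h1 : (0:ℝ) ≤ β^2 * g t * ‖v t‖^2 :=
        mul_nonneg (mul_nonneg (sq_nonneg β) hgpos) (sq_nonneg _)
      linarith
    have hE0 : 0 ≤ E t := le_trans hW0 hWle
    have hNle : β^2 * ‖v t‖^2 ≤ (1/a₀) * E t := by
      rw [one_div, ← mul_le_mul_iff_right₀ ha₀]
      calc a₀ * (β^2 * ‖v t‖^2) ≤ E t := hEge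
        _ = a₀ * (a₀⁻¹ * E t) := by field_simp
    have hsum : β^2 * ‖v t‖^2 + ‖v' t‖^2 ≤ (1/a₀ + 1) * E t := by linarith
    have term1 : β^2 * g' t * ‖v t‖^2 ≤ (L/a₀) * B * E t := by
      have h1 : g' t ≤ L * B := le_trans (le_abs_self _) hg'le
      have h2 : β^2 * g' t * ‖v t‖^2 ≤ (L*B) * (β^2 * ‖v t‖^2) := by
        have := mul_le_mul_of_nonneg_right h1 hβ2N
        linarith
      have h3 : (L*B) * (β^2 * ‖v t‖^2) ≤ (L*B) * ((1/a₀) * E t) :=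
        mul_le_mul_of_nonneg_left hNle (by positivity)
      calc β^2 * g' t * ‖v t‖^2 ≤ (L*B) * ((1/a₀) * E t) := le_trans h2 h3
        _ = (L/a₀) * B * E t := by ring
    have term2 : 2*β^2*(g t - aext t) * ⟪v t, v' t⟫ ≤ (L * (1/a₀+1)) * B * E t := by
      have e1 : (g t - aext t) * ⟪v t, v' t⟫ ≤ (L*ε^α) * (‖v t‖ * ‖v' t‖) := by
        calc (g t - aext t) * ⟪v t, v' t⟫ ≤ |(g t - aext t) * ⟪v t, v' t⟫| := le_abs_self _
          _ = |g t - aext t| * |⟪v t, v' t⟫| := abs_mul _ _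
          _ ≤ (L*ε^α) * (‖v t‖ * ‖v' t‖) :=
              mul_le_mul hgale hPle (abs_nonneg _) (by positivity)
      have e2 : 2*β^2*(g t - aext t) * ⟪v t, v' t⟫ ≤ (L*ε^α) * β * (β^2*‖v t‖^2 + ‖v' t‖^2) := by
        have h4 : 2*(β*‖v t‖)*‖v' t‖ ≤ β^2*‖v t‖^2 + ‖v' t‖^2 := by
          nlinarith [sq_nonneg (β*‖v t‖ - ‖v' t‖)]
        have c1 := mul_le_mul_of_nonneg_left e1 (by positivity : (0:ℝ) ≤ 2*β^2)
        have c2 := mul_le_mul_of_nonneg_left h4 (by positivity : (0:ℝ) ≤ L*ε^α*β)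
        linarith [c1, c2]
      have e3 : (L*ε^α) * β * (β^2*‖v t‖^2 + ‖v' t‖^2) ≤ (L*B) * (β^2*‖v t‖^2 + ‖v' t‖^2) := by
        apply mul_le_mul_of_nonneg_right _ (by positivity)
        calc L*ε^α*β = L*(β*ε^α) := by ring
          _ ≤ L*B := mul_le_mul_of_nonneg_left hexp2 hL
      have e4 : (L*B)*(β^2*‖v t‖^2+‖v' t‖^2) ≤ (L*B)*((1/a₀+1)*E t) :=
        mul_le_mul_of_nonneg_left hsum (by positivity)
      calc 2*β^2*(g t - aext t)*⟪v t, v' t⟫ ≤ (L*B)*((1/a₀+1)*E t) :=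
            le_trans e2 (le_trans e3 e4)
        _ = (L*(1/a₀+1)) * B * E t := by ring
    have hfin : β^2 * g' t * ‖v t‖^2 + 2*β^2*(g t - aext t)*⟪v t, v' t⟫ ≤ (K*B) * E t := by
      have h7 : (L/a₀) * B * E t + (L*(1/a₀+1)) * B * E t ≤ (K*B)*E t := by
        have h8 : 0 ≤ B * E t := by positivity
        rw [hK]; linarith
      linarith
    simpa [hD] using hfin
  have hGr := aux_gronwall hT.le hEderiv hbd
  intro t ht
  have hEt := hGr t ht
  have hfin1 : β^2 * ‖v t‖^2 + ‖v' t‖^2 ≤ (1/a₀+1) * E t := by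
    have hβ2N : (0:ℝ) ≤ β^2 * ‖v t‖^2 := by positivity
    have h1 : a₀ * (β^2 * ‖v t‖^2) ≤ E t := by
      simp only [hE]
      have := mul_le_mul_of_nonneg_right (hglb t) hβ2N
      linarith [sq_nonneg (‖v' t‖)]
    have h2 : ‖v' t‖^2 ≤ E t := by
      simp only [hE]
      have h1 : (0:ℝ) ≤ β^2 * g t * ‖v t‖^2 :=
        mul_nonneg (mul_nonneg (sq_nonneg β) (le_trans ha₀.le (hglb t))) (sq_nonneg _)
      linarith
    have h3 : β^2 * ‖v t‖^2 ≤ (1/a₀) * E t := by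
      rw [one_div, ← mul_le_mul_iff_right₀ ha₀]
      calc a₀ * (β^2 * ‖v t‖^2) ≤ E t := h1
        _ = a₀ * (a₀⁻¹ * E t) := by field_simp
    linarith
  have hfin2 : E 0 ≤ (M+1) * (β^2 * ‖v 0‖^2 + ‖v' 0‖^2) := by
    have h1 : g 0 ≤ M := by
      have h2 := hga 0
      have h3 : ε^α ≤ 1 := Real.rpow_le_one hεpos.le hε1 hα.le
      have h4 : g 0 - aext 0 ≤ L * ε^α := le_trans (le_abs_self _) h2
      have h5 : L * ε^α ≤ L := by nlinarith
      have := hub 0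
      simp only [hM]; linarith
    simp only [hE]
    have hβ2N : (0:ℝ) ≤ β^2 * ‖v 0‖^2 := by positivity
    have h6 := mul_le_mul_of_nonneg_right h1 hβ2N
    have h7 : (0:ℝ) ≤ ‖v 0‖^2 := sq_nonneg _
    have h8 : (0:ℝ) ≤ ‖v' 0‖^2 := sq_nonneg _
    nlinarith [h6, h7, h8, hMpos]
  have hX0 : 0 ≤ β^2 * ‖v 0‖^2 + ‖v' 0‖^2 := by positivity
  have hexppos : (0:ℝ) < Real.exp ((K*B) * t) := Real.exp_pos _
  calc β^2 * ‖v t‖^2 + ‖v' t‖^2 ≤ (1/a₀+1) * E t := hfin1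
    _ ≤ (1/a₀+1) * (E 0 * Real.exp ((K*B)*t)) := by
        apply mul_le_mul_of_nonneg_left hEt (by positivity)
    _ ≤ (1/a₀+1) * (((M+1) * (β^2 * ‖v 0‖^2 + ‖v' 0‖^2)) * Real.exp ((K*B)*t)) := by
        apply mul_le_mul_of_nonneg_left _ (by positivity)
        exact mul_le_mul_of_nonneg_right hfin2 hexppos.le
    _ = (1/a₀+1) * (M+1) * Real.exp (K * t * B) * (β^2 * ‖v 0‖^2 + ‖v' 0‖^2) := by
        rw [show (K*B)*t = K*t*B by ring]; ring
end
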